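/- Let A and A' be fields of characteristic 0 that are algebraic over ℚ, and let f be a field isomorphism from the rational function field A(t) onto the rational function field A'(t'). Then f maps the subfield of constants A onto the subfield of constants A'; in particular, the restriction of f to A is a field isomorphism from A onto A'. -/

import Mathlib

lemma ratfunc_charZero (A : Type) [Field A] [CharZero A] : CharZero (RatFunc A) :=
  charZero_of_injective_algebraMap (algebraMap A (RatFunc A)).injective

/-- In `RatFunc A` with `A` algebraic over `ℚ`, the elements algebraic over `ℚ`
are exactly the constants. -/
lemma ratfunc_isAlgebraic_iff (A : Type) [Field A] [CharZero A]
    [Algebra.IsAlgebraic ℚ A] (x : RatFunc A) :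
    haveI := ratfunc_charZero A
    IsAlgebraic ℚ x ↔ x ∈ Set.range (RatFunc.C : A →+* RatFunc A) := by
  haveI := ratfunc_charZero A
  constructor
  · intro h
    -- algebraic over A
    have hA : IsAlgebraic A x :=
      h.extendScalars (algebraMap ℚ A).injective
    have hint : IsIntegral (Polynomial A) x :=
      (hA.isIntegral).tower_top
    obtain ⟨p, hp⟩ := IsIntegrallyClosed.isIntegral_iff.mp hint
    have hpalg : IsAlgebraic A p := by
      rwa [← isAlgebraic_algebraMap_iff (S := Polynomial A) (A := RatFunc A)
        (IsFractionRing.injective _ _), hp]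
    have hdeg : p.natDegree = 0 := by
      by_contra hne
      exact (p.transcendental hne
        (mem_nonZeroDivisors_of_ne_zero (Polynomial.leadingCoeff_ne_zero.mpr
          (fun h0 => hne (by simp [h0]))))) hpalg
    obtain ⟨a, rfl⟩ := Polynomial.natDegree_eq_zero.mp hdeg
    exact ⟨a, by rw [← hp, RatFunc.algebraMap_C]⟩
  · rintro ⟨a, rfl⟩
    have : IsAlgebraic ℚ a := Algebra.IsAlgebraic.isAlgebraic a
    have := this.algebraMap (A := RatFunc A)
    rwa [show algebraMap A (RatFunc A) a = RatFunc.C a from rfl] at this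

lemma map_algebraic {A A' : Type} [Field A] [Field A'] [CharZero A] [CharZero A']
    (f : RatFunc A →+* RatFunc A') {x : RatFunc A}
    (hx : haveI := ratfunc_charZero A; IsAlgebraic ℚ x) :
    haveI := ratfunc_charZero A'
    IsAlgebraic ℚ (f x) := by
  haveI := ratfunc_charZero A
  haveI := ratfunc_charZero A'
  exact hx.ringHom_of_comp_eq (RingHom.id ℚ) f (fun a b => by simp)
    (Subsingleton.elim _ _)

/-- For fields `A`, `A'` of characteristic 0 algebraic over `ℚ`, any field
isomorphism `f : A(t) ≃ A'(t')` maps the subfield of constants `A` onto the subfield of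
constants `A'`; in particular the restriction of `f` gives a field isomorphism `A ≃ A'`. -/
theorem stmt_2 (A A' : Type) [Field A] [Field A'] [CharZero A] [CharZero A']
    [Algebra.IsAlgebraic ℚ A] [Algebra.IsAlgebraic ℚ A']
    (f : RatFunc A ≃+* RatFunc A') :
    f '' Set.range (RatFunc.C : A →+* RatFunc A) =
        Set.range (RatFunc.C : A' →+* RatFunc A') ∧
      ∃ e : A ≃+* A', ∀ a : A, f (RatFunc.C a) = RatFunc.C (e a) := by
  haveI := ratfunc_charZero A
  haveI := ratfunc_charZero A'
  have himg : f '' Set.range (RatFunc.C : A →+* RatFunc A) =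
      Set.range (RatFunc.C : A' →+* RatFunc A') := by
    ext y
    constructor
    · rintro ⟨x, hx, rfl⟩
      exact (ratfunc_isAlgebraic_iff A' _).mp
        (map_algebraic f.toRingHom ((ratfunc_isAlgebraic_iff A x).mpr hx))
    · intro hy
      refine ⟨f.symm y, ?_, by simp⟩
      exact (ratfunc_isAlgebraic_iff A _).mp
        (map_algebraic f.symm.toRingHom ((ratfunc_isAlgebraic_iff A' y).mpr hy))
  refine ⟨himg, ?_⟩
  -- construct e
  have hfwd : ∀ a : A, ∃ a' : A', f (RatFunc.C a) = RatFunc.C a' := by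
    intro a
    have : f (RatFunc.C a) ∈ Set.range (RatFunc.C : A' →+* RatFunc A') := by
      rw [← himg]; exact ⟨RatFunc.C a, ⟨a, rfl⟩, rfl⟩
    obtain ⟨a', ha'⟩ := this
    exact ⟨a', ha'.symm⟩
  have hbwd : ∀ a' : A', ∃ a : A, f.symm (RatFunc.C a') = RatFunc.C a := by
    intro a'
    have : (RatFunc.C a' : RatFunc A') ∈ f '' Set.range (RatFunc.C : A →+* RatFunc A) := by
      rw [himg]; exact ⟨a', rfl⟩
    obtain ⟨x, ⟨a, rfl⟩, hx⟩ := this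
    exact ⟨a, by rw [← hx, f.symm_apply_apply]⟩
  choose g hg using hfwd
  choose g' hg' using hbwd
  have hCinj : Function.Injective (RatFunc.C : A →+* RatFunc A) :=
    RingHom.injective (RatFunc.C : A →+* RatFunc A)
  have hCinj' : Function.Injective (RatFunc.C : A' →+* RatFunc A') :=
    RingHom.injective (RatFunc.C : A' →+* RatFunc A')
  refine ⟨{ toFun := g, invFun := g',
            left_inv := ?_, right_inv := ?_,
            map_mul' := ?_, map_add' := ?_ }, fun a => (hg a)⟩
  · intro a
    apply hCinj
    rw [← hg' (g a), ← hg a, f.symm_apply_apply]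
  · intro a'
    apply hCinj'
    rw [← hg (g' a'), ← hg' a', f.apply_symm_apply]
  · intro a b
    apply hCinj'
    rw [map_mul, ← hg, ← hg, ← hg, map_mul, map_mul]
  · intro a b
    apply hCinj'
    rw [map_add, ← hg, ← hg, ← hg, map_add, map_add]
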